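/- Let N ∈ ℕ, let f : [0,1] → ℝ^N be continuous, and set L := ∫_0^1 ‖f(t)‖ dt. Then the family ((S^I(f))^2), indexed by all multi-indices I of all lengths m ≥ 0 with entries in {1,…,N}, is summable, and Σ_{m≥0} Σ_{|I|=m} (S^I(f))^2 ≤ Σ_{m≥0} N^m L^{2m} / (m!)^2 < ∞. (The path signature has finite norm: S(γ) lies in the subspace T_1((𝔤)) of the tensor algebra consisting of tensors with finite ℓ²-norm and zeroth component 1.) -/

import Mathlib

open MeasureTheory

/-- The simplex of nondecreasing `m`-tuples with entries in `[0,1]`. -/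
def simplex (m : ℕ) : Set (Fin m → ℝ) :=
  {t | (∀ j, t j ∈ Set.Icc (0:ℝ) 1) ∧ ∀ j k : Fin m, j ≤ k → t j ≤ t k}

/-- The signature coefficient of `f : [0,1] → ℝ^N` (Euclidean norm on `ℝ^N`) with
respect to a multi-index `I`; for the empty multi-index it equals `1`. -/
noncomputable def sig {N : ℕ} (f : ℝ → EuclideanSpace ℝ (Fin N)) {m : ℕ}
    (I : Fin m → Fin N) : ℝ :=
  ∫ t in simplex m, ∏ j, f (t j) (I j)

lemma isClosed_simplex (m : ℕ) : IsClosed (simplex m) := by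
  have h : simplex m = (⋂ j, {t : Fin m → ℝ | t j ∈ Set.Icc (0:ℝ) 1}) ∩
      ⋂ (j) (k) (_ : j ≤ k), {t : Fin m → ℝ | t j ≤ t k} := by
    ext t
    simp only [simplex, Set.mem_setOf_eq, Set.mem_inter_iff, Set.mem_iInter]
  rw [h]
  exact (isClosed_iInter fun j => isClosed_Icc.preimage (continuous_apply j)).inter
    (isClosed_iInter fun j => isClosed_iInter fun k => isClosed_iInter fun _ =>
      isClosed_le (continuous_apply j) (continuous_apply k))

lemma isCompact_simplex (m : ℕ) : IsCompact (simplex m) := by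
  refine (isCompact_univ_pi
      (fun _ : Fin m => isCompact_Icc (a := (0:ℝ)) (b := 1))).of_isClosed_subset
    (isClosed_simplex m) ?_
  intro t ht j _
  exact ht.1 j

lemma euclidean_coord_le {N : ℕ} (x : EuclideanSpace ℝ (Fin N)) (i : Fin N) : |x i| ≤ ‖x‖ := by
  rw [EuclideanSpace.norm_eq, ← Real.sqrt_sq_eq_abs]
  apply Real.sqrt_le_sqrt
  have := Finset.single_le_sum (f := fun j => ‖x j‖ ^ 2) (fun j _ => by positivity)
    (Finset.mem_univ i)
  simpa [Real.norm_eq_abs, sq_abs] using this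

lemma null_eq_coord (m : ℕ) (j k : Fin m) (hjk : j ≠ k) :
    volume {t : Fin m → ℝ | t j = t k} = 0 := by
  set φ : (Fin m → ℝ) →ₗ[ℝ] ℝ :=
    (LinearMap.proj (R := ℝ) (φ := fun _ : Fin m => ℝ) j) -
    (LinearMap.proj (R := ℝ) (φ := fun _ : Fin m => ℝ) k) with hφ
  have hker : {t : Fin m → ℝ | t j = t k} = ↑(LinearMap.ker φ) := by
    ext t
    simp [hφ, LinearMap.mem_ker, sub_eq_zero]
  rw [hker]
  apply Measure.addHaar_submodule
  intro h
  have := (Submodule.eq_top_iff'.1 h) (Pi.single j 1)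
  simp [hφ, LinearMap.mem_ker, Pi.single_apply, hjk, Ne.symm hjk] at this

/-- The set of tuples in the cube that are strictly increasing after reordering by `σ`. -/
def sorted (m : ℕ) (σ : Equiv.Perm (Fin m)) : Set (Fin m → ℝ) :=
  {t | (∀ j, t j ∈ Set.Icc (0:ℝ) 1) ∧ StrictMono (t ∘ σ)}

lemma measurableSet_sorted (m : ℕ) (σ : Equiv.Perm (Fin m)) :
    MeasurableSet (sorted m σ) := by
  have h : sorted m σ = (⋂ j, {t : Fin m → ℝ | t j ∈ Set.Icc (0:ℝ) 1}) ∩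
      ⋂ (j) (k) (_ : j < k), {t : Fin m → ℝ | t (σ j) < t (σ k)} := by
    ext t
    simp only [sorted, Set.mem_setOf_eq, Set.mem_inter_iff, Set.mem_iInter]
    exact and_congr Iff.rfl ⟨fun h j k hjk => h hjk, fun h a b hab => h a b hab⟩
  rw [h]
  exact ((MeasurableSet.iInter fun j =>
      (measurableSet_Icc).preimage (measurable_pi_apply j))).inter
    (MeasurableSet.iInter fun j => MeasurableSet.iInter fun k => MeasurableSet.iInter fun _ =>
      measurableSet_lt (measurable_pi_apply _) (measurable_pi_apply _))

lemma strictMono_perm_eq_id {m : ℕ} (π : Equiv.Perm (Fin m)) (h : StrictMono ⇑π) :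
    π = 1 := by
  haveI : WellFoundedLT (Fin m) := inferInstance
  have hinv : StrictMono ⇑π⁻¹ := fun a b hab => by
    by_contra hc
    have : π (π⁻¹ b) ≤ π (π⁻¹ a) := h.monotone (not_lt.1 hc)
    simp only [Equiv.Perm.inv_def, Equiv.apply_symm_apply] at this
    exact absurd hab (not_lt.2 this)
  apply Equiv.ext
  intro j
  have h1 : j ≤ π j := h.le_apply
  have h2 : j ≤ π⁻¹ j := hinv.le_apply
  have h3 : π j ≤ π (π⁻¹ j) := h.monotone h2
  simp only [Equiv.Perm.inv_def, Equiv.apply_symm_apply] at h3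
  simpa using le_antisymm h3 h1

lemma sorted_disjoint (m : ℕ) : Pairwise (Function.onFun Disjoint (sorted m)) := by
  intro σ τ hst
  rw [Function.onFun, Set.disjoint_left]
  rintro t ⟨_, hs⟩ ⟨_, ht⟩
  apply hst
  have hπ : StrictMono ⇑(τ.trans σ.symm) := by
    intro j k hjk
    by_contra hc
    have h1 : (τ.trans σ.symm) k ≤ (τ.trans σ.symm) j := not_lt.1 hc
    have h2 : t (σ ((τ.trans σ.symm) k)) ≤ t (σ ((τ.trans σ.symm) j)) :=
      hs.monotone h1
    simp only [Equiv.trans_apply, Equiv.apply_symm_apply] at h2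
    exact absurd (ht hjk) (not_lt.2 h2)
  have hid := strictMono_perm_eq_id (τ.trans σ.symm) hπ
  apply Equiv.ext
  intro j
  have h3 : σ.symm (τ j) = j := by
    simpa [Equiv.trans_apply] using congrArg (fun e : Equiv.Perm (Fin m) => e j) hid
  exact ((Equiv.symm_apply_eq σ).1 h3).symm

lemma sorted_one_ae (m : ℕ) : sorted m 1 =ᵐ[volume] simplex m := by
  rw [MeasureTheory.ae_eq_set]
  constructor
  · have : sorted m 1 \ simplex m = ∅ := by
      rw [Set.diff_eq_empty]
      rintro t ⟨h1, h2⟩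
      refine ⟨h1, fun j k hjk => ?_⟩
      have : StrictMono t := by simpa using h2
      exact this.monotone hjk
    simp [this]
  · apply measure_mono_null
      (t := ⋃ (j : Fin m), ⋃ (k : Fin m), ⋃ (_ : j ≠ k), {t : Fin m → ℝ | t j = t k})
    · rintro t ⟨⟨h1, h2⟩, h3⟩
      have hns : ¬ StrictMono t := by
        intro hs
        exact h3 ⟨h1, by simpa using hs⟩
      rw [StrictMono] at hns
      push_neg at hns
      obtain ⟨a, b, hab, hnlt⟩ := hns
      have heq : t a = t b := le_antisymm (h2 a b hab.le) hnlt
      exact Set.mem_iUnion.2 ⟨a, Set.mem_iUnion.2 ⟨b, Set.mem_iUnion.2 ⟨hab.ne, heq⟩⟩⟩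
    · exact measure_iUnion_null fun j => measure_iUnion_null fun k =>
        measure_iUnion_null fun h => null_eq_coord m j k h

lemma factorial_mul_simplex_integral_le {g : ℝ → ℝ} (hg : Integrable g)
    (hgnn : ∀ t, 0 ≤ g t) (m : ℕ) :
    (m.factorial : ℝ) * ∫ t in simplex m, ∏ j, g (t j) ≤ (∫ t, g t) ^ m := by
  set G : (Fin m → ℝ) → ℝ := fun t => ∏ j, g (t j) with hG
  have hGint : Integrable G :=
    Integrable.fintype_prod (𝕜 := ℝ) (f := fun _ : Fin m => g) (fun _ => hg)
  have hGnn : ∀ t, 0 ≤ G t := fun t => Finset.prod_nonneg fun j _ => hgnn _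
  have hperm : ∀ σ : Equiv.Perm (Fin m),
      ∫ t in sorted m σ, G t = ∫ t in sorted m 1, G t := by
    intro σ
    have hmp := volume_measurePreserving_piCongrLeft (fun _ : Fin m => ℝ) σ.symm
    set e := MeasurableEquiv.piCongrLeft (fun _ : Fin m => ℝ) σ.symm with he
    have happ : ∀ (t : Fin m → ℝ) (j : Fin m), e t j = t (σ j) := by
      intro t j
      have h2 := Equiv.piCongrLeft_apply_apply (fun _ : Fin m => ℝ) σ.symm t (σ j)
      rw [he, MeasurableEquiv.coe_piCongrLeft]
      simpa using h2
    have hGe : ∀ t, G (e t) = G t := by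
      intro t
      simp only [hG, happ]
      exact Equiv.prod_comp σ fun j => g (t j)
    have hpre : e ⁻¹' (sorted m 1) = sorted m σ := by
      ext t
      simp only [Set.mem_preimage, sorted, Set.mem_setOf_eq, happ]
      constructor
      · rintro ⟨h1, h2⟩
        refine ⟨fun j => ?_, ?_⟩
        · simpa using h1 (σ.symm j)
        · intro a b hab
          have := h2 hab
          simpa [happ] using this
      · rintro ⟨h1, h2⟩
        refine ⟨fun j => h1 _, ?_⟩
        intro a b hab
        simpa [happ] using h2 hab
    have key := hmp.setIntegral_preimage_emb (e.measurableEmbedding) G (sorted m 1)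
    rw [hpre] at key
    rw [← key]
    exact setIntegral_congr_fun (measurableSet_sorted m σ) fun t _ => (hGe t).symm
  have hsum : ∑ σ : Equiv.Perm (Fin m), ∫ t in sorted m σ, G t
      = ∫ t in ⋃ σ, sorted m σ, G t :=
    (integral_iUnion_fintype (measurableSet_sorted m) (sorted_disjoint m)
      (fun σ => hGint.integrableOn)).symm
  have hle : ∫ t in ⋃ σ, sorted m σ, G t ≤ ∫ t, G t :=
    setIntegral_le_integral hGint (Filter.Eventually.of_forall hGnn)
  have htot : ∫ t, G t = (∫ t, g t) ^ m := by
    simpa [hG, volume_pi] using MeasureTheory.integral_fintype_prod_eq_pow (ι := Fin m) g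
  have hsimp : ∫ t in simplex m, G t = ∫ t in sorted m 1, G t :=
    (setIntegral_congr_set (sorted_one_ae m)).symm
  calc (m.factorial : ℝ) * ∫ t in simplex m, G t
      = ∑ _σ : Equiv.Perm (Fin m), ∫ t in sorted m 1, G t := by
        rw [Finset.sum_const, Finset.card_univ, Fintype.card_perm, Fintype.card_fin,
          nsmul_eq_mul, hsimp]
    _ = ∑ σ : Equiv.Perm (Fin m), ∫ t in sorted m σ, G t :=
        (Finset.sum_congr rfl fun σ _ => (hperm σ)).symm
    _ ≤ (∫ t, g t) ^ m := by rw [hsum, ← htot]; exact hle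

set_option maxHeartbeats 2000000 in
/-- **The path signature has finite norm**: the family of squared signature
coefficients, indexed by all multi-indices of all lengths, is summable, and
`Σ_{m≥0} Σ_{|I|=m} (S^I(f))² ≤ Σ_{m≥0} N^m L^{2m}/(m!)² < ∞` where
`L = ∫_0^1 ‖f(t)‖ dt`. -/
theorem signature_finite_norm (N : ℕ) (f : ℝ → EuclideanSpace ℝ (Fin N))
    (hf : ContinuousOn f (Set.Icc 0 1)) :
    Summable (fun I : Σ m : ℕ, (Fin m → Fin N) => (sig f I.2) ^ 2) ∧
    Summable (fun m : ℕ =>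
      (N : ℝ) ^ m * (∫ t in (0:ℝ)..1, ‖f t‖) ^ (2 * m) / ((m.factorial : ℝ)) ^ 2) ∧
    (∑' I : Σ m : ℕ, (Fin m → Fin N), (sig f I.2) ^ 2) ≤
      ∑' m : ℕ,
        (N : ℝ) ^ m * (∫ t in (0:ℝ)..1, ‖f t‖) ^ (2 * m) / ((m.factorial : ℝ)) ^ 2 := by
  classical
  set L : ℝ := ∫ t in (0:ℝ)..1, ‖f t‖ with hLdef
  set g : ℝ → ℝ := (Set.Icc (0:ℝ) 1).indicator (fun t => ‖f t‖) with hgdef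
  have hgint : Integrable g :=
    ((hf.norm).integrableOn_compact isCompact_Icc).integrable_indicator measurableSet_Icc
  have hgnn : ∀ t, 0 ≤ g t := fun t => by
    rw [hgdef]
    exact Set.indicator_nonneg (fun s _ => norm_nonneg _) t
  have hgL : ∫ t, g t = L := by
    rw [hgdef, integral_indicator measurableSet_Icc, hLdef,
      intervalIntegral.integral_of_le zero_le_one, integral_Icc_eq_integral_Ioc]
  have hLnn : 0 ≤ L := by
    rw [← hgL]
    exact integral_nonneg hgnn
  -- the key pointwise bound on signature coefficients
  have hsig : ∀ (m : ℕ) (I : Fin m → Fin N), |sig f I| ≤ L ^ m / (m.factorial : ℝ) := by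
    intro m I
    have hfacpos : (0:ℝ) < (m.factorial : ℝ) := by positivity
    rw [le_div_iff₀ hfacpos]
    have hhc : ContinuousOn (fun t : Fin m → ℝ => ∏ j, f (t j) (I j)) (simplex m) := by
      apply continuousOn_finset_prod
      intro j _
      have h1 : ContinuousOn (fun t : Fin m → ℝ => f (t j)) (simplex m) := by
        apply hf.comp (continuous_apply j).continuousOn
        intro t ht
        exact ht.1 j
      exact (EuclideanSpace.proj (I j) : EuclideanSpace ℝ (Fin N) →L[ℝ] ℝ)
        |>.continuous.comp_continuousOn h1
    have hint : IntegrableOn (fun t : Fin m → ℝ => ∏ j, f (t j) (I j)) (simplex m) :=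
      hhc.integrableOn_compact (isCompact_simplex m)
    have hGint : IntegrableOn (fun t : Fin m → ℝ => ∏ j, g (t j)) (simplex m) :=
      (Integrable.fintype_prod (𝕜 := ℝ) (f := fun _ : Fin m => g)
        (fun _ => hgint)).integrableOn
    have hbound : ∀ t ∈ simplex m, |∏ j, f (t j) (I j)| ≤ ∏ j, g (t j) := by
      intro t ht
      rw [Finset.abs_prod]
      apply Finset.prod_le_prod (fun j _ => abs_nonneg _)
      intro j _
      have h1 : |f (t j) (I j)| ≤ ‖f (t j)‖ := euclidean_coord_le _ _
      have h2 : g (t j) = ‖f (t j)‖ := Set.indicator_of_mem (ht.1 j) _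
      rw [h2]; exact h1
    have h3 : |sig f I| ≤ ∫ t in simplex m, ∏ j, g (t j) := by
      calc |sig f I| ≤ ∫ t in simplex m, |∏ j, f (t j) (I j)| := by
            rw [sig, ← Real.norm_eq_abs]
            simpa only [Real.norm_eq_abs] using
              norm_integral_le_integral_norm (μ := volume.restrict (simplex m))
                (fun t : Fin m → ℝ => ∏ j, f (t j) (I j))
        _ ≤ ∫ t in simplex m, ∏ j, g (t j) :=
            setIntegral_mono_on hint.abs hGint (isClosed_simplex m).measurableSet hbound
    calc |sig f I| * (m.factorial : ℝ) ≤ (∫ t in simplex m, ∏ j, g (t j)) * (m.factorial : ℝ) :=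
          mul_le_mul_of_nonneg_right h3 hfacpos.le
      _ = (m.factorial : ℝ) * ∫ t in simplex m, ∏ j, g (t j) := mul_comm _ _
      _ ≤ (∫ t, g t) ^ m := factorial_mul_simplex_integral_le hgint hgnn m
      _ = L ^ m := by rw [hgL]
  -- per-level bound for the finite sums
  have hfiber : ∀ m : ℕ, ∑ I : Fin m → Fin N, (sig f I) ^ 2
      ≤ (N : ℝ) ^ m * L ^ (2 * m) / ((m.factorial : ℝ)) ^ 2 := by
    intro m
    have hone : ∀ I : Fin m → Fin N, (sig f I) ^ 2 ≤ (L ^ m / (m.factorial : ℝ)) ^ 2 := by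
      intro I
      rw [← sq_abs]
      exact pow_le_pow_left₀ (abs_nonneg _) (hsig m I) 2
    calc ∑ I : Fin m → Fin N, (sig f I) ^ 2
        ≤ (Finset.univ : Finset (Fin m → Fin N)).card • (L ^ m / (m.factorial : ℝ)) ^ 2 :=
          Finset.sum_le_card_nsmul _ _ _ (fun I _ => hone I)
      _ = (N : ℝ) ^ m * L ^ (2 * m) / ((m.factorial : ℝ)) ^ 2 := by
          rw [Finset.card_univ, Fintype.card_fun, Fintype.card_fin, Fintype.card_fin,
            nsmul_eq_mul, div_pow, ← pow_mul, Nat.cast_pow, mul_comm m 2]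
          ring
  have hbnn : ∀ m : ℕ, (0:ℝ) ≤ (N : ℝ) ^ m * L ^ (2 * m) / ((m.factorial : ℝ)) ^ 2 := by
    intro m; positivity
  -- summability of the majorant series
  have hbsum : Summable (fun m : ℕ =>
      (N : ℝ) ^ m * L ^ (2 * m) / ((m.factorial : ℝ)) ^ 2) := by
    apply Summable.of_nonneg_of_le hbnn
      (f := fun m => ((N : ℝ) * L ^ 2) ^ m / (m.factorial : ℝ))
    · intro m
      have h1 : (N : ℝ) ^ m * L ^ (2 * m) = ((N : ℝ) * L ^ 2) ^ m := by
        rw [mul_pow, ← pow_mul, mul_comm 2 m]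
      rw [h1]
      apply div_le_div_of_nonneg_left (by positivity) (by positivity)
      calc (m.factorial : ℝ) = (m.factorial : ℝ) * 1 := (mul_one _).symm
        _ ≤ (m.factorial : ℝ) * (m.factorial : ℝ) := by
            apply mul_le_mul_of_nonneg_left _ (by positivity)
            exact_mod_cast Nat.one_le_iff_ne_zero.2 m.factorial_ne_zero
        _ = ((m.factorial : ℝ)) ^ 2 := (sq _).symm
    · exact Real.summable_pow_div_factorial _
  -- summability of the family of squared coefficients
  have hfib_sum : ∀ m : ℕ, Summable (fun I : Fin m → Fin N => (sig f I) ^ 2) :=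
    fun m => Summable.of_finite
  have hS2 : Summable (fun m : ℕ => ∑' I : Fin m → Fin N, (sig f I) ^ 2) := by
    apply Summable.of_nonneg_of_le
      (fun m => tsum_nonneg fun I => sq_nonneg _)
      (fun m => ?_) hbsum
    rw [tsum_fintype]
    exact hfiber m
  have hS : Summable (fun I : Σ m : ℕ, (Fin m → Fin N) => (sig f I.2) ^ 2) := by
    apply (summable_sigma_of_nonneg (fun I => sq_nonneg _)).2
    exact ⟨fun m => hfib_sum m, hS2⟩
  refine ⟨hS, hbsum, ?_⟩
  rw [Summable.tsum_sigma' (fun m => hfib_sum m) hS]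
  apply Summable.tsum_le_tsum _ hS2 hbsum
  intro m
  rw [tsum_fintype]
  exact hfiber m
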